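/- arXiv:2107.14513 — 2 statements merged into one kernel-verified Lean document; each statement's English description precedes it below -/
import Mathlib

section
/- Let Ω ⊂ ℝ^d be a measurable set, K ≥ 1 an integer, and B¹, …, B^K ⊂ Ω pairwise disjoint measurable sets with Lebesgue measures satisfying 0 < 𝓛(B^k) ≤ M̄ for all k. Let φ₁, …, φ_K ∈ L²(Ω) be orthonormal, and let η ≥ 0 satisfy η·(K² + K) ≤ 1/2. Assume that for all j, k ∈ {1,…,K}: ∫_{Ω \ ⋃_k B^k} φ_j² dx ≤ η and ∫_{B^k} (φ_j − ⟨φ_j⟩_{B^k})² dx ≤ η, where ⟨φ⟩_B = (1/𝓛(B))·∫_B φ dx denotes the average of φ over B. Define the matrix Σ ∈ ℝ^{K×K} by Σ_{kj} = ⟨φ_j⟩_{B^k}. Then for every β ∈ ℝ^K one has |Σβ| ≥ (2M̄)^{-1/2}·|β| (Euclidean norms); moreover, if in addition 𝓛(B^k) ≥ m > 0 for all k, then |Σβ| ≤ m^{-1/2}·|β|. (This is the matrix-of-averages invertibility lemma, Lemma 3 of the paper, in quantitative conditional form.) -/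
open Metric Set MeasureTheory
open scoped ENNReal

noncomputable section

/-- `ℝ^n` with the Euclidean norm. -/
abbrev Euc (n : ℕ) := EuclideanSpace ℝ (Fin n)

set_option maxHeartbeats 1000000 in
/-- Matrix-of-averages invertibility (Lemma 3 in quantitative form).
If `B¹, …, B^K ⊆ Ω` are pairwise disjoint with `0 < 𝓛(B^k) ≤ M̄`, `φ₁, …, φ_K ∈ L²(Ω)`
are orthonormal, `η (K² + K) ≤ 1/2`, and the exterior masses and intra-component
oscillations of the `φ_j` are at most `η`, then the matrix `Σ` of averages
`Σ_{kj} = ⟨φ_j⟩_{B^k}` satisfies `|Σβ| ≥ (2M̄)^{-1/2} |β|`; moreover if `𝓛(B^k) ≥ m > 0`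
for all `k`, then `|Σβ| ≤ m^{-1/2} |β|`. -/
theorem averages_matrix_bounds
    (d K : ℕ) (hK : 1 ≤ K)
    (Ω : Set (Euc d)) (hΩ : MeasurableSet Ω)
    (B : Fin K → Set (Euc d)) (hBmeas : ∀ k, MeasurableSet (B k))
    (hBsub : ∀ k, B k ⊆ Ω) (hdisj : Pairwise (Function.onFun Disjoint B))
    (Mbar : ℝ) (hBpos : ∀ k, 0 < volume (B k))
    (hBle : ∀ k, volume (B k) ≤ ENNReal.ofReal Mbar)
    (φ : Fin K → Euc d → ℝ)
    (hL2 : ∀ j, MemLp (φ j) 2 (volume.restrict Ω))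
    (horth : ∀ j k, (∫ x in Ω, φ j x * φ k x) = if j = k then (1 : ℝ) else 0)
    (η : ℝ) (hη : 0 ≤ η) (hηsmall : η * ((K : ℝ) ^ 2 + K) ≤ 1 / 2)
    (hext : ∀ j, (∫ x in Ω \ ⋃ k, B k, (φ j x) ^ 2) ≤ η)
    (Sm : Matrix (Fin K) (Fin K) ℝ)
    (hSm : ∀ k j, Sm k j = (volume (B k)).toReal⁻¹ * ∫ x in B k, φ j x)
    (hosc : ∀ j k, (∫ x in B k, (φ j x - Sm k j) ^ 2) ≤ η) :
    (∀ β : Fin K → ℝ,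
        (Real.sqrt (2 * Mbar))⁻¹ * Real.sqrt (∑ k, (β k) ^ 2) ≤
          Real.sqrt (∑ k, (Sm.mulVec β k) ^ 2)) ∧
    (∀ m : ℝ, 0 < m → (∀ k, ENNReal.ofReal m ≤ volume (B k)) →
      ∀ β : Fin K → ℝ,
        Real.sqrt (∑ k, (Sm.mulVec β k) ^ 2) ≤
          (Real.sqrt m)⁻¹ * Real.sqrt (∑ k, (β k) ^ 2)) := by
  classical
  have hU : MeasurableSet (⋃ k, B k) := MeasurableSet.iUnion hBmeas
  have hUsub : (⋃ k, B k) ⊆ Ω := iUnion_subset hBsub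
  have hEsub : (Ω \ ⋃ k, B k) ⊆ Ω := diff_subset
  have hfin : ∀ k, volume (B k) < ⊤ := fun k => lt_of_le_of_lt (hBle k) ENNReal.ofReal_lt_top
  have hMpos : 0 < Mbar := by
    by_contra h
    push_neg at h
    have h1 := hBle ⟨0, hK⟩
    rw [ENNReal.ofReal_eq_zero.mpr h] at h1
    exact absurd (le_antisymm h1 zero_le) (hBpos ⟨0, hK⟩).ne'
  have hLpos : ∀ k, 0 < (volume (B k)).toReal := fun k =>
    ENNReal.toReal_pos (hBpos k).ne' (hfin k).ne
  have hLle : ∀ k, (volume (B k)).toReal ≤ Mbar := by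
    intro k
    have h := ENNReal.toReal_mono ENNReal.ofReal_ne_top (hBle k)
    rwa [ENNReal.toReal_ofReal hMpos.le] at h
  have hFM : ∀ k, IsFiniteMeasure (volume.restrict (B k)) := fun k =>
    ⟨by rw [Measure.restrict_apply_univ]; exact hfin k⟩
  have hmem : ∀ (j : Fin K) (S : Set (Euc d)), S ⊆ Ω → MemLp (φ j) 2 (volume.restrict S) :=
    fun j S hS => (hL2 j).mono_measure (Measure.restrict_mono hS le_rfl)
  have hφint : ∀ j k, IntegrableOn (φ j) (B k) volume := by
    intro j k
    haveI := hFM k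
    exact (hmem j _ (hBsub k)).integrable one_le_two
  have hmul : ∀ (j l : Fin K), IntegrableOn (fun x => φ j x * φ l x) Ω volume := by
    intro j l
    have hhalf : (1 : ℝ≥0∞)/1 = 1/2 + 1/2 := by
      rw [ENNReal.div_add_div_same, one_div]
      norm_num [ENNReal.div_self]
    have h : Integrable (φ j • φ l) (volume.restrict Ω) :=
      memLp_one_iff_integrable.mp ((hL2 l).smul (hL2 j))
    exact h.congr (Filter.Eventually.of_forall fun x => by
      simp [Pi.smul_apply', smul_eq_mul])
  have hsq : ∀ (j : Fin K) (S : Set (Euc d)), S ⊆ Ω →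
      IntegrableOn (fun x => φ j x ^ 2) S volume :=
    fun j S hS => (hmem j S hS).integrable_sq
  -- main per-β estimates
  have main : ∀ β : Fin K → ℝ,
      (∑ j, β j ^ 2) ≤ 2 * Mbar * ∑ k, (Sm.mulVec β k) ^ 2 ∧
      ∀ m : ℝ, 0 < m → (∀ k, ENNReal.ofReal m ≤ volume (B k)) →
        m * (∑ k, (Sm.mulVec β k) ^ 2) ≤ ∑ j, β j ^ 2 := by
    intro β
    set ψ : Euc d → ℝ := fun x => ∑ j, β j * φ j x with hψdef
    set S : ℝ := ∑ j, β j ^ 2 with hSdef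
    set a : Fin K → ℝ := Sm.mulVec β with hadef
    have hSnn : 0 ≤ S := Finset.sum_nonneg fun j _ => sq_nonneg _
    have hmulVec : ∀ k, a k = ∑ j, Sm k j * β j := fun k => by
      rw [hadef]; simp [Matrix.mulVec, dotProduct]
    have hψmem : ∀ (T : Set (Euc d)), T ⊆ Ω → MemLp ψ 2 (volume.restrict T) := by
      intro T hT
      exact memLp_finset_sum Finset.univ (fun j _ => (hmem j T hT).const_mul (β j))
    have hψint : ∀ k, IntegrableOn ψ (B k) volume := fun k =>
      integrable_finset_sum Finset.univ (fun j _ => (hφint j k).const_mul (β j))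
    have hψsq : ∀ (T : Set (Euc d)), T ⊆ Ω → IntegrableOn (fun x => ψ x ^ 2) T volume :=
      fun T hT => (hψmem T hT).integrable_sq
    -- L² norm of ψ over Ω equals S
    have hSval : (∫ x in Ω, ψ x ^ 2) = S := by
      have hpt : ∀ x, ψ x ^ 2 = ∑ j, ∑ l, (β j * β l) * (φ j x * φ l x) := by
        intro x
        rw [sq, hψdef, Finset.sum_mul_sum]
        exact Finset.sum_congr rfl fun j _ => Finset.sum_congr rfl fun l _ => by ring
      calc (∫ x in Ω, ψ x ^ 2)
          = ∫ x in Ω, ∑ j, ∑ l, (β j * β l) * (φ j x * φ l x) := by simp only [hpt]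
        _ = ∑ j, ∫ x in Ω, ∑ l, (β j * β l) * (φ j x * φ l x) :=
            integral_finset_sum _ fun j _ =>
              integrable_finset_sum _ fun l _ => (hmul j l).const_mul _
        _ = ∑ j, ∑ l, ∫ x in Ω, (β j * β l) * (φ j x * φ l x) :=
            Finset.sum_congr rfl fun j _ =>
              integral_finset_sum _ fun l _ => (hmul j l).const_mul _
        _ = ∑ j, ∑ l, (β j * β l) * ∫ x in Ω, φ j x * φ l x := by
            simp [integral_const_mul]
        _ = S := by
            simp only [horth, hSdef, mul_ite, mul_one, mul_zero]
            simp [Finset.sum_ite_eq, sq]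
    -- the average of ψ over B k is a k
    have havg : ∀ k, (∫ x in B k, ψ x) = (volume (B k)).toReal * a k := by
      intro k
      have h1 : (∫ x in B k, ψ x) = ∑ j, β j * ∫ x in B k, φ j x := by
        rw [hψdef, integral_finset_sum _ fun j _ => (hφint j k).const_mul (β j)]
        simp [integral_const_mul]
      rw [h1, hmulVec k, Finset.mul_sum]
      refine Finset.sum_congr rfl fun j _ => ?_
      rw [hSm k j, ← mul_assoc, ← mul_assoc, mul_inv_cancel₀ (hLpos k).ne', one_mul,
        mul_comm]
    -- the identity ∫_{B k} ψ² = L_k a_k² + ∫_{B k} (ψ - a_k)²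
    have hIdent : ∀ k, (∫ x in B k, ψ x ^ 2)
        = (volume (B k)).toReal * a k ^ 2 + ∫ x in B k, (ψ x - a k) ^ 2 := by
      intro k
      haveI := hFM k
      have hexp : ∀ x : Euc d, (ψ x - a k) ^ 2 = (ψ x ^ 2 - 2 * a k * ψ x) + a k ^ 2 :=
        fun x => by ring
      have hI2 : Integrable (fun x => 2 * a k * ψ x) (volume.restrict (B k)) :=
        (hψint k).const_mul (2 * a k)
      have hI1 : Integrable (fun x => ψ x ^ 2 - 2 * a k * ψ x) (volume.restrict (B k)) :=
        ((hψsq _ (hBsub k)).sub hI2).congr (Filter.Eventually.of_forall fun x => rfl)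
      have e1 : (∫ x in B k, (ψ x - a k) ^ 2)
          = ∫ x in B k, ((ψ x ^ 2 - 2 * a k * ψ x) + a k ^ 2) := by simp only [hexp]
      have e2 : (∫ x in B k, ((ψ x ^ 2 - 2 * a k * ψ x) + a k ^ 2))
          = (∫ x in B k, (ψ x ^ 2 - 2 * a k * ψ x)) + ∫ _x in B k, (a k ^ 2 : ℝ) := by
        rw [integral_add hI1 (integrable_const _)]
      have e3 : (∫ x in B k, (ψ x ^ 2 - 2 * a k * ψ x))
          = (∫ x in B k, ψ x ^ 2) - ∫ x in B k, 2 * a k * ψ x := by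
        rw [integral_sub (hψsq _ (hBsub k)) hI2]
      have e4 : (∫ x in B k, 2 * a k * ψ x) = 2 * a k * ((volume (B k)).toReal * a k) := by
        rw [integral_const_mul, havg k]
      have e5 : (∫ _x in B k, (a k ^ 2 : ℝ)) = (volume (B k)).toReal * a k ^ 2 := by
        rw [setIntegral_const, smul_eq_mul]; rfl
      rw [e1, e2, e3, e4, e5]
      ring
    -- oscillation bound
    have hosck : ∀ k, (∫ x in B k, (ψ x - a k) ^ 2) ≤ S * ((K : ℝ) * η) := by
      intro k
      have hdiff : ∀ x, ψ x - a k = ∑ j, β j * (φ j x - Sm k j) := by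
        intro x
        rw [hmulVec k, hψdef, ← Finset.sum_sub_distrib]
        exact Finset.sum_congr rfl fun j _ => by ring
      have hpt : ∀ x, (ψ x - a k) ^ 2 ≤ S * ∑ j, (φ j x - Sm k j) ^ 2 := by
        intro x
        rw [hdiff x, hSdef]
        exact Finset.sum_mul_sq_le_sq_mul_sq _ _ _
      have hgsq : ∀ j, Integrable (fun x => (φ j x - Sm k j) ^ 2) (volume.restrict (B k)) := by
        intro j
        haveI := hFM k
        have h := ((hmem j _ (hBsub k)).sub (memLp_const (Sm k j))).integrable_sq
        exact h.congr (Filter.Eventually.of_forall fun x => by simp)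
      have hl : Integrable (fun x => (ψ x - a k) ^ 2) (volume.restrict (B k)) := by
        haveI := hFM k
        have h := ((hψmem _ (hBsub k)).sub (memLp_const (a k))).integrable_sq
        exact h.congr (Filter.Eventually.of_forall fun x => by simp)
      have hr : Integrable (fun x => S * ∑ j, (φ j x - Sm k j) ^ 2)
          (volume.restrict (B k)) :=
        (integrable_finset_sum _ fun j _ => hgsq j).const_mul S
      calc (∫ x in B k, (ψ x - a k) ^ 2)
          ≤ ∫ x in B k, S * ∑ j, (φ j x - Sm k j) ^ 2 :=
            integral_mono hl hr fun x => hpt x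
        _ = S * ∑ j, ∫ x in B k, (φ j x - Sm k j) ^ 2 := by
            rw [integral_const_mul, integral_finset_sum _ fun j _ => hgsq j]
        _ ≤ S * ((K : ℝ) * η) := by
            refine mul_le_mul_of_nonneg_left ?_ hSnn
            calc (∑ j, ∫ x in B k, (φ j x - Sm k j) ^ 2)
                ≤ ∑ _j : Fin K, η := Finset.sum_le_sum fun j _ => hosc j k
              _ = (K : ℝ) * η := by
                  simp [Finset.sum_const, Finset.card_univ, nsmul_eq_mul]
    -- exterior bound
    have hextψ : (∫ x in Ω \ ⋃ k, B k, ψ x ^ 2) ≤ S * ((K : ℝ) * η) := by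
      have hpt : ∀ x, ψ x ^ 2 ≤ S * ∑ j, φ j x ^ 2 := by
        intro x
        rw [hψdef, hSdef]
        exact Finset.sum_mul_sq_le_sq_mul_sq _ _ _
      have hr : Integrable (fun x => S * ∑ j, φ j x ^ 2)
          (volume.restrict (Ω \ ⋃ k, B k)) :=
        (integrable_finset_sum _ fun j _ => hsq j _ hEsub).const_mul S
      calc (∫ x in Ω \ ⋃ k, B k, ψ x ^ 2)
          ≤ ∫ x in Ω \ ⋃ k, B k, S * ∑ j, φ j x ^ 2 :=
            integral_mono (hψsq _ hEsub) hr fun x => hpt x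
        _ = S * ∑ j, ∫ x in Ω \ ⋃ k, B k, φ j x ^ 2 := by
            rw [integral_const_mul, integral_finset_sum _ fun j _ => hsq j _ hEsub]
        _ ≤ S * ((K : ℝ) * η) := by
            refine mul_le_mul_of_nonneg_left ?_ hSnn
            calc (∑ j, ∫ x in Ω \ ⋃ k, B k, φ j x ^ 2)
                ≤ ∑ _j : Fin K, η := Finset.sum_le_sum fun j _ => hext j
              _ = (K : ℝ) * η := by
                  simp [Finset.sum_const, Finset.card_univ, nsmul_eq_mul]
    -- splitting of the integral over Ω
    have hsplit : (∫ x in Ω, ψ x ^ 2)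
        = (∫ x in Ω \ ⋃ k, B k, ψ x ^ 2) + ∑ k, ∫ x in B k, ψ x ^ 2 := by
      have h1 : (∫ x in Ω \ ⋃ k, B k, ψ x ^ 2)
          = (∫ x in Ω, ψ x ^ 2) - ∫ x in ⋃ k, B k, ψ x ^ 2 :=
        integral_diff hU (hψsq Ω subset_rfl) hUsub
      have h2 : (∫ x in ⋃ k, B k, ψ x ^ 2) = ∑ k, ∫ x in B k, ψ x ^ 2 := by
        rw [integral_iUnion hBmeas hdisj (hψsq _ hUsub), tsum_fintype]
      rw [h1, h2]; ring
    set T : ℝ := ∑ k, a k ^ 2 with hTdef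
    have hTnn : 0 ≤ T := Finset.sum_nonneg fun k _ => sq_nonneg _
    have hosc_nn : ∀ k, 0 ≤ ∫ x in B k, (ψ x - a k) ^ 2 := fun k =>
      setIntegral_nonneg (hBmeas k) fun x _ => sq_nonneg _
    have hext_nn : 0 ≤ ∫ x in Ω \ ⋃ k, B k, ψ x ^ 2 :=
      setIntegral_nonneg (hΩ.diff hU) fun x _ => sq_nonneg _
    have hS1 : S = (∫ x in Ω \ ⋃ k, B k, ψ x ^ 2)
        + ((∑ k, (volume (B k)).toReal * a k ^ 2) + ∑ k, ∫ x in B k, (ψ x - a k) ^ 2) := by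
      rw [← hSval, hsplit, ← Finset.sum_add_distrib]
      congr 1
      exact Finset.sum_congr rfl fun k _ => hIdent k
    constructor
    · -- lower bound : S ≤ 2 Mbar T
      have hLaT : (∑ k, (volume (B k)).toReal * a k ^ 2) ≤ Mbar * T := by
        rw [hTdef, Finset.mul_sum]
        exact Finset.sum_le_sum fun k _ => mul_le_mul_of_nonneg_right (hLle k) (sq_nonneg _)
      have hsum_osc : (∑ k, ∫ x in B k, (ψ x - a k) ^ 2) ≤ (K : ℝ) * (S * ((K : ℝ) * η)) := by
        calc (∑ k, ∫ x in B k, (ψ x - a k) ^ 2)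
            ≤ ∑ _k : Fin K, S * ((K : ℝ) * η) := Finset.sum_le_sum fun k _ => hosck k
          _ = (K : ℝ) * (S * ((K : ℝ) * η)) := by
              simp [Finset.sum_const, Finset.card_univ, nsmul_eq_mul]
      have h5 : S * ((K : ℝ) * η) + (K : ℝ) * (S * ((K : ℝ) * η))
          = S * (η * ((K : ℝ) ^ 2 + K)) := by ring
      have h4 : S * (η * ((K : ℝ) ^ 2 + K)) ≤ S * (1 / 2) :=
        mul_le_mul_of_nonneg_left hηsmall hSnn
      have goal : S ≤ 2 * Mbar * T := by linarith [hS1, hextψ, hLaT, hsum_osc, h4, h5]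
      exact goal
    · -- upper bound : m T ≤ S
      intro m hm0 hm
      have hmL : ∀ k, m ≤ (volume (B k)).toReal := by
        intro k
        have h := ENNReal.toReal_mono (hfin k).ne (hm k)
        rwa [ENNReal.toReal_ofReal hm0.le] at h
      have h1 : m * T ≤ ∑ k, ∫ x in B k, ψ x ^ 2 := by
        rw [hTdef, Finset.mul_sum]
        refine Finset.sum_le_sum fun k _ => ?_
        rw [hIdent k]
        have := mul_le_mul_of_nonneg_right (hmL k) (sq_nonneg (a k))
        linarith [hosc_nn k]
      linarith [hS1, hext_nn, hosc_nn, h1]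
  -- conclude
  have h2M : 0 < 2 * Mbar := by linarith
  constructor
  · intro β
    obtain ⟨hlow, _⟩ := main β
    have hSnn : (0:ℝ) ≤ ∑ j, β j ^ 2 := Finset.sum_nonneg fun j _ => sq_nonneg _
    have hdiv : (∑ j, β j ^ 2) / (2 * Mbar) ≤ ∑ k, (Sm.mulVec β k) ^ 2 :=
      (div_le_iff₀ h2M).mpr (by linarith [hlow])
    calc (Real.sqrt (2 * Mbar))⁻¹ * Real.sqrt (∑ k, (β k) ^ 2)
        = Real.sqrt (∑ k, (β k) ^ 2) / Real.sqrt (2 * Mbar) := by rw [inv_mul_eq_div]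
      _ = Real.sqrt ((∑ k, (β k) ^ 2) / (2 * Mbar)) := (Real.sqrt_div hSnn _).symm
      _ ≤ Real.sqrt (∑ k, (Sm.mulVec β k) ^ 2) := Real.sqrt_le_sqrt hdiv
  · intro m hm0 hm β
    obtain ⟨_, hupp⟩ := main β
    have h1 := hupp m hm0 hm
    have hTnn : (0:ℝ) ≤ ∑ k, (Sm.mulVec β k) ^ 2 := Finset.sum_nonneg fun k _ => sq_nonneg _
    have hdiv : (∑ k, (Sm.mulVec β k) ^ 2) ≤ (∑ j, β j ^ 2) / m :=
      (le_div_iff₀ hm0).mpr (by linarith)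
    calc Real.sqrt (∑ k, (Sm.mulVec β k) ^ 2)
        ≤ Real.sqrt ((∑ j, β j ^ 2) / m) := Real.sqrt_le_sqrt hdiv
      _ = Real.sqrt (∑ j, β j ^ 2) / Real.sqrt m :=
          Real.sqrt_div (Finset.sum_nonneg fun j _ => sq_nonneg _) _
      _ = (Real.sqrt m)⁻¹ * Real.sqrt (∑ k, (β k) ^ 2) := by rw [inv_mul_eq_div]
end
end

section
/- Let Ω ⊂ ℝ^d be a bounded measurable set, K ≥ 1 an integer, and c, m, M̄ > 0. Then there exist constants C > 0 and η₀ > 0, depending only on K, c, m, M̄, with the following property. Let ε, δ ∈ (0, η₀]; let B¹, …, B^K ⊂ Ω be pairwise disjoint measurable sets with 𝓛(B^k) ≤ M̄; let M ⊂ Ω be measurable with 𝓛(M ∩ B^k) ≤ c·δ for every k; set B^k_δ = B^k \ M and E = Ω \ (M ∪ ⋃_k B^k), and assume 𝓛(B^k_δ) ≥ m for every k. Let φ₁, …, φ_K ∈ L²(Ω) be orthonormal and satisfy, for all j, k: ∫_E φ_j² ≤ c·ε, ∫_M φ_j² ≤ c·δ, and ∫_{B^k_δ} (φ_j − ⟨φ_j⟩_{B^k_δ})²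 ≤ c·ε, where ⟨φ⟩_B is the average of φ over B. Then for every γ ∈ ℝ^K and v = Σ_{k=1}^K γ_k·χ_{B^k} one has inf_{β ∈ ℝ^K} ‖v − Σ_{j=1}^K β_j φ_j‖_{L²(Ω)} ≤ C·√(ε + δ)·‖v‖_{L²(Ω)}. (This is the conditional form of the main approximation estimate, Theorem 2, Part 1: every piecewise constant function in the span of the characteristic functions χ_{B^k} is approximated in the span of φ₁,…,φ_K with error O(√(ε+δ)).) -/
set_option maxHeartbeats 1000000

open Metric Set MeasureTheory
open scoped ENNReal

noncomputable section

lemma pc_cs_sum_abs {K : ℕ} (β : Fin K → ℝ) :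
    ∑ j, |β j| ≤ Real.sqrt K * Real.sqrt (∑ j, β j ^ 2) := by
  have h := sq_sum_le_card_mul_sum_sq (s := Finset.univ) (f := fun j => |β j|)
  simp only [Finset.card_univ, Fintype.card_fin, sq_abs] at h
  have h0 : 0 ≤ ∑ j, |β j| := Finset.sum_nonneg fun j _ => abs_nonneg _
  calc ∑ j, |β j| = Real.sqrt ((∑ j, |β j|) ^ 2) := (Real.sqrt_sq h0).symm
    _ ≤ Real.sqrt ((K : ℝ) * ∑ j, β j ^ 2) := Real.sqrt_le_sqrt h
    _ = Real.sqrt K * Real.sqrt (∑ j, β j ^ 2) := Real.sqrt_mul (by positivity) _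

lemma pc_norm_sum_smul {H : Type*} [NormedAddCommGroup H] [InnerProductSpace ℝ H]
    {K : ℕ} {f : Fin K → H} (hf : Orthonormal ℝ f) (β : Fin K → ℝ) :
    ‖∑ j, β j • f j‖ = Real.sqrt (∑ j, β j ^ 2) := by
  have h := hf.inner_sum β β Finset.univ
  simp only [starRingEnd_apply, star_trivial] at h
  rw [real_inner_self_eq_norm_sq] at h
  rw [← Real.sqrt_sq (norm_nonneg _), h]
  congr 1; exact Finset.sum_congr rfl fun j _ => (sq (β j)).symm ▸ rfl

/-- Abstract Hilbert space approximation lemma. -/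
lemma pc_approx_in_span {H : Type*} [NormedAddCommGroup H] [InnerProductSpace ℝ H]
    [CompleteSpace H] {K : ℕ} (f e : Fin K → H)
    (hf : Orthonormal ℝ f) (he : Orthonormal ℝ e)
    {ρ : ℝ} (hρ0 : 0 ≤ ρ) (hρ : Real.sqrt K * ρ ≤ 1/2)
    (hclose : ∀ j, ∃ g ∈ Submodule.span ℝ (Set.range e), ‖f j - g‖ ≤ ρ)
    (x : H) (hx : x ∈ Submodule.span ℝ (Set.range e)) :
    ∃ β : Fin K → ℝ, ‖x - ∑ j, β j • f j‖ ≤ 2 * (Real.sqrt K * ρ) * ‖x‖ := by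
  classical
  set S : Submodule ℝ H := Submodule.span ℝ (Set.range e) with hS
  set F : Submodule ℝ H := Submodule.span ℝ (Set.range f) with hF
  have hSfin : FiniteDimensional ℝ S := FiniteDimensional.span_of_finite ℝ (Set.finite_range e)
  have hFfin : FiniteDimensional ℝ F := FiniteDimensional.span_of_finite ℝ (Set.finite_range f)
  have hScomp : CompleteSpace S := FiniteDimensional.complete ℝ S
  -- orthogonal projection onto S
  have hQmin : ∀ (u : H) (g : H), g ∈ S → ‖u - (S.orthogonalProjectionOnto u : H)‖ ≤ ‖u - g‖ := by
    intro u g hg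
    rw [show ((S.orthogonalProjectionOnto u : S) : H) = S.starProjection u from rfl,
      Submodule.starProjection_minimal]
    exact ciInf_le_of_le ⟨0, fun r ⟨w, hw⟩ => hw ▸ norm_nonneg _⟩ (⟨g, hg⟩ : S) le_rfl
  have hQf : ∀ j, ‖f j - (S.orthogonalProjectionOnto (f j) : H)‖ ≤ ρ := by
    intro j
    obtain ⟨g, hg, hgle⟩ := hclose j
    exact (hQmin (f j) g hg).trans hgle
  -- the map T : F → S
  set T : F →ₗ[ℝ] S := (S.orthogonalProjectionOnto).toLinearMap.comp F.subtype with hT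
  have hTbound : ∀ y : F, ‖(y : H) - (T y : H)‖ ≤ (Real.sqrt K * ρ) * ‖(y : H)‖ := by
    intro y
    obtain ⟨β, hβ⟩ := (Submodule.mem_span_range_iff_exists_fun ℝ).mp y.2
    have hTy : (T y : H) = ∑ j, β j • (S.orthogonalProjectionOnto (f j) : H) := by
      simp only [hT, LinearMap.comp_apply, ContinuousLinearMap.coe_coe, Submodule.subtype_apply]
      rw [← hβ]
      rw [map_sum]
      push_cast
      exact Finset.sum_congr rfl fun j _ => by rw [(S.orthogonalProjectionOnto).map_smul]; rfl
    have hyd : (y : H) - (T y : H) = ∑ j, β j • (f j - (S.orthogonalProjectionOnto (f j) : H)) := by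
      rw [hTy, ← hβ, ← Finset.sum_sub_distrib]
      exact Finset.sum_congr rfl fun j _ => (smul_sub _ _ _).symm
    rw [hyd]
    calc ‖∑ j, β j • (f j - (S.orthogonalProjectionOnto (f j) : H))‖
        ≤ ∑ j, ‖β j • (f j - (S.orthogonalProjectionOnto (f j) : H))‖ := norm_sum_le _ _
      _ ≤ ∑ j, |β j| * ρ := by
          refine Finset.sum_le_sum fun j _ => ?_
          rw [norm_smul, Real.norm_eq_abs]
          exact mul_le_mul_of_nonneg_left (hQf j) (abs_nonneg _)
      _ = (∑ j, |β j|) * ρ := by rw [Finset.sum_mul]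
      _ ≤ (Real.sqrt K * Real.sqrt (∑ j, β j ^ 2)) * ρ :=
          mul_le_mul_of_nonneg_right (pc_cs_sum_abs β) hρ0
      _ = (Real.sqrt K * ρ) * ‖(y : H)‖ := by
          rw [← hβ, pc_norm_sum_smul hf]; ring
  -- T is injective
  have hTinj : Function.Injective T := by
    rw [← LinearMap.ker_eq_bot, LinearMap.ker_eq_bot']
    intro y hy
    by_contra hy0
    have h1 : ‖(y : H)‖ ≤ (Real.sqrt K * ρ) * ‖(y : H)‖ := by
      have := hTbound y
      rw [hy] at this
      simpa using this
    have h2 : 0 < ‖(y : H)‖ := by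
      simp only [norm_pos_iff]
      exact fun h => hy0 (Subtype.ext h)
    nlinarith [Real.sq_sqrt (show (0:ℝ) ≤ K by positivity)]
  have hfinrank : Module.finrank ℝ F = Module.finrank ℝ S := by
    rw [hF, hS, finrank_span_eq_card hf.linearIndependent,
      finrank_span_eq_card he.linearIndependent]
  have hTsurj : Function.Surjective T :=
    (LinearMap.injective_iff_surjective_of_finrank_eq_finrank hfinrank).mp hTinj
  obtain ⟨y, hy⟩ := hTsurj ⟨x, hx⟩
  have hxy : ‖x - (y : H)‖ ≤ (Real.sqrt K * ρ) * ‖(y : H)‖ := by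
    have := hTbound y
    rw [hy] at this
    rwa [norm_sub_rev] at this
  have hynorm : ‖(y : H)‖ ≤ 2 * ‖x‖ := by
    have h1 : ‖(y : H)‖ ≤ ‖x‖ + ‖x - (y : H)‖ := by
      calc ‖(y : H)‖ = ‖x - (x - (y : H))‖ := by rw [sub_sub_cancel]
        _ ≤ ‖x‖ + ‖x - (y : H)‖ := norm_sub_le _ _
    have h2 := hxy
    have h3 : (Real.sqrt K * ρ) * ‖(y : H)‖ ≤ (1/2) * ‖(y : H)‖ :=
      mul_le_mul_of_nonneg_right hρ (norm_nonneg _)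
    linarith
  obtain ⟨β, hβ⟩ := (Submodule.mem_span_range_iff_exists_fun ℝ).mp y.2
  refine ⟨β, ?_⟩
  rw [hβ]
  calc ‖x - (y : H)‖ ≤ (Real.sqrt K * ρ) * ‖(y : H)‖ := hxy
    _ ≤ (Real.sqrt K * ρ) * (2 * ‖x‖) :=
        mul_le_mul_of_nonneg_left hynorm (by positivity)
    _ = 2 * (Real.sqrt K * ρ) * ‖x‖ := by ring

lemma pc_inner_toLp {α : Type*} {mα : MeasurableSpace α} {μ : Measure α}
    {f g : α → ℝ} (hf : MemLp f 2 μ) (hg : MemLp g 2 μ) :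
    (inner ℝ (hf.toLp f) (hg.toLp g) : ℝ) = ∫ x, f x * g x ∂μ := by
  rw [MeasureTheory.L2.inner_def]
  refine integral_congr_ae ?_
  filter_upwards [hf.coeFn_toLp, hg.coeFn_toLp] with x h1 h2
  simp [h1, h2, RCLike.inner_apply, mul_comm]

lemma pc_norm_toLp_sq {α : Type*} {mα : MeasurableSpace α} {μ : Measure α}
    {f : α → ℝ} (hf : MemLp f 2 μ) :
    ‖hf.toLp f‖ ^ 2 = ∫ x, f x ^ 2 ∂μ := by
  rw [← real_inner_self_eq_norm_sq, pc_inner_toLp hf hf]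
  simp_rw [sq]

lemma pc_coeFn_sum {α : Type*} {mα : MeasurableSpace α} {μ : Measure α} {ι : Type*}
    (s : Finset ι) (a : ι → ℝ) (F : ι → Lp ℝ 2 μ) :
    ⇑(∑ i ∈ s, a i • F i) =ᵐ[μ] fun x => ∑ i ∈ s, a i * (F i) x := by
  classical
  induction s using Finset.induction_on with
  | empty => simp only [Finset.sum_empty]; exact Lp.coeFn_zero _ _ _
  | @insert i s hi ih =>
    rw [Finset.sum_insert hi]
    filter_upwards [Lp.coeFn_add (a i • F i) (∑ j ∈ s, a j • F j),
      Lp.coeFn_smul (a i) (F i), ih] with x h1 h2 h3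
    rw [h1, Pi.add_apply, h2, Finset.sum_insert hi, h3]
    simp [smul_eq_mul]

lemma pc_coeFn_sum' {α : Type*} {mα : MeasurableSpace α} {μ : Measure α} {n : ℕ}
    (a : Fin n → ℝ) (F : Fin n → Lp ℝ 2 μ) (g : Fin n → α → ℝ)
    (hg : ∀ i, ⇑(F i) =ᵐ[μ] g i) :
    ⇑(∑ i, a i • F i) =ᵐ[μ] fun x => ∑ i, a i * g i x := by
  filter_upwards [pc_coeFn_sum Finset.univ a F, ae_all_iff.mpr hg] with x h1 h2
  rw [h1]
  exact Finset.sum_congr rfl fun i _ => by rw [h2 i]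

/-- Conditional form of the main approximation estimate (Theorem 2,
Part 1): under the abstracted hypotheses on the components `B^k`, the interface
neighborhood `M`, and the orthonormal family `φ₁, …, φ_K`, every piecewise constant
function `v = ∑ γ_k χ_{B^k}` is approximated in the span of `φ₁, …, φ_K` with `L²` error
at most `C √(ε + δ) ‖v‖_{L²(Ω)}`. -/
theorem piecewise_constant_approximation_in_span
    (d K : ℕ) (hK : 1 ≤ K)
    (Ω : Set (Euc d)) (hΩm : MeasurableSet Ω) (hΩb : Bornology.IsBounded Ω)
    (c m Mbar : ℝ) (hc : 0 < c) (hm : 0 < m) (hMbar : 0 < Mbar) :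
    ∃ C > 0, ∃ η₀ > 0, ∀ ε δ : ℝ, ε ∈ Set.Ioc (0 : ℝ) η₀ → δ ∈ Set.Ioc (0 : ℝ) η₀ →
      ∀ B : Fin K → Set (Euc d), (∀ k, MeasurableSet (B k)) → (∀ k, B k ⊆ Ω) →
        Pairwise (Function.onFun Disjoint B) →
        (∀ k, volume (B k) ≤ ENNReal.ofReal Mbar) →
      ∀ M : Set (Euc d), MeasurableSet M → M ⊆ Ω →
        (∀ k, volume (M ∩ B k) ≤ ENNReal.ofReal (c * δ)) →
        (∀ k, ENNReal.ofReal m ≤ volume (B k \ M)) →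
      ∀ φ : Fin K → Euc d → ℝ, (∀ j, MemLp (φ j) 2 (volume.restrict Ω)) →
        (∀ j k, (∫ x in Ω, φ j x * φ k x) = if j = k then (1 : ℝ) else 0) →
        (∀ j, (∫ x in Ω \ (M ∪ ⋃ k, B k), (φ j x) ^ 2) ≤ c * ε) →
        (∀ j, (∫ x in M, (φ j x) ^ 2) ≤ c * δ) →
        (∀ j k, (∫ x in B k \ M,
            (φ j x - (volume (B k \ M)).toReal⁻¹ * ∫ y in B k \ M, φ j y) ^ 2) ≤ c * ε) →
      ∀ γ : Fin K → ℝ, ∃ β : Fin K → ℝ,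
        eLpNorm
            (fun x => (∑ k, γ k * (B k).indicator (fun _ => (1 : ℝ)) x)
              - ∑ j, β j * φ j x) 2 (volume.restrict Ω)
          ≤ ENNReal.ofReal (C * Real.sqrt (ε + δ)) *
            eLpNorm (fun x => ∑ k, γ k * (B k).indicator (fun _ => (1 : ℝ)) x) 2
              (volume.restrict Ω) := by
  classical
  have hK0 : (0 : ℝ) < K := by exact_mod_cast Nat.lt_of_lt_of_le Nat.zero_lt_one hK
  set C : ℝ := 2 * Real.sqrt (K * c) / Real.sqrt m + 4 * Real.sqrt K * Real.sqrt (c * (K + 1)) + 1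
    with hCdef
  have hCpos : 0 < C := by rw [hCdef]; positivity
  have hη1 : (0:ℝ) < m / (4 * K * c) := by
    apply div_pos hm
    have : (0:ℝ) < 4 * K := by linarith
    exact mul_pos this hc
  have hη2 : (0:ℝ) < 1 / (16 * K * (K + 1) * c) := by
    apply div_pos one_pos
    have h1 : (0:ℝ) < 16 * K := by linarith
    have h2 : (0:ℝ) < (K:ℝ) + 1 := by linarith
    exact mul_pos (mul_pos h1 h2) hc
  refine ⟨C, hCpos, min (m / (4 * K * c)) (1 / (16 * K * (K + 1) * c)), lt_min hη1 hη2, ?_⟩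
  intro ε δ hε hδ B hBmeas hBsub hBdisj hBle M hMmeas hMsub hMBle hBδge
    φ hφ hortho hEint hMint hBδint γ
  set μ := volume.restrict Ω with hμdef
  -- basic facts about the sets
  have hBδmeas : ∀ k, MeasurableSet (B k \ M) := fun k => (hBmeas k).diff hMmeas
  have hBδsub : ∀ k, B k \ M ⊆ Ω := fun k => (diff_subset).trans (hBsub k)
  have hvolB_ne_top : ∀ k, volume (B k) ≠ ∞ :=
    fun k => ne_top_of_le_ne_top ENNReal.ofReal_ne_top (hBle k)
  have hvolBδ_ne_top : ∀ k, volume (B k \ M) ≠ ∞ :=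
    fun k => ne_top_of_le_ne_top (hvolB_ne_top k) (measure_mono diff_subset)
  have hμeq : ∀ s : Set (Euc d), MeasurableSet s → s ⊆ Ω → μ s = volume s := by
    intro s hs hsub
    rw [hμdef, Measure.restrict_apply hs, inter_eq_self_of_subset_left hsub]
  set t : Fin K → ℝ := fun k => (volume (B k \ M)).toReal with htdef
  have ht_m : ∀ k, m ≤ t k := by
    intro k
    have := ENNReal.toReal_mono (hvolBδ_ne_top k) (hBδge k)
    rwa [ENNReal.toReal_ofReal hm.le] at this
  have ht_pos : ∀ k, 0 < t k := fun k => lt_of_lt_of_le hm (ht_m k)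
  have hst_pos : ∀ k, 0 < Real.sqrt (t k) := fun k => Real.sqrt_pos.mpr (ht_pos k)
  -- Lp elements
  set a : Fin K → ℝ := fun k => (Real.sqrt (t k))⁻¹ with hadef
  have hμBδ_ne_top : ∀ k, μ (B k \ M) ≠ ∞ := by
    intro k; rw [hμeq _ (hBδmeas k) (hBδsub k)]; exact hvolBδ_ne_top k
  have hμB_ne_top : ∀ k, μ (B k) ≠ ∞ := by
    intro k; rw [hμeq _ (hBmeas k) (hBsub k)]; exact hvolB_ne_top k
  have he_mem : ∀ k, MemLp ((B k \ M).indicator (fun _ => a k)) 2 μ :=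
    fun k => memLp_indicator_const 2 (hBδmeas k) (a k) (Or.inr (hμBδ_ne_top k))
  have hu_mem : ∀ k, MemLp ((B k).indicator (fun _ => (1:ℝ))) 2 μ :=
    fun k => memLp_indicator_const 2 (hBmeas k) 1 (Or.inr (hμB_ne_top k))
  set e : Fin K → Lp ℝ 2 μ := fun k => (he_mem k).toLp _ with hedef
  set u : Fin K → Lp ℝ 2 μ := fun k => (hu_mem k).toLp _ with hudef
  set f : Fin K → Lp ℝ 2 μ := fun j => (hφ j).toLp _ with hfdef
  have hf_on : Orthonormal ℝ f := by
    rw [orthonormal_iff_ite]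
    intro i j
    rw [hfdef]
    simp only
    rw [pc_inner_toLp (hφ i) (hφ j)]
    exact hortho i j
  have hta : ∀ k, t k * a k ^ 2 = 1 := by
    intro k
    rw [hadef]
    simp only
    rw [inv_pow, Real.sq_sqrt (ht_pos k).le]
    exact mul_inv_cancel₀ (ht_pos k).ne'
  have he_on : Orthonormal ℝ e := by
    rw [orthonormal_iff_ite]
    intro k l
    rw [hedef]
    simp only
    rw [pc_inner_toLp (he_mem k) (he_mem l)]
    by_cases hkl : k = l
    · subst hkl
      simp only [if_pos rfl]
      have hpt : (fun x => (B k \ M).indicator (fun _ => a k) x *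
          (B k \ M).indicator (fun _ => a k) x)
          = fun x => (B k \ M).indicator (fun _ => a k ^ 2) x := by
        funext x
        by_cases hx : x ∈ B k \ M <;> simp [Set.indicator_apply, hx, sq]
      rw [hpt, integral_indicator_const _ (hBδmeas k), Measure.real, hμeq _ (hBδmeas k) (hBδsub k),
        smul_eq_mul]
      exact hta k
    · simp only [if_neg hkl]
      have hd : Disjoint (B k \ M) (B l \ M) :=
        ((hBdisj hkl).mono diff_subset diff_subset)
      have hpt : (fun x => (B k \ M).indicator (fun _ => a k) x *
          (B l \ M).indicator (fun _ => a l) x) = fun _ => (0:ℝ) := by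
        funext x
        by_cases hx : x ∈ B k \ M
        · have hx2 : x ∉ B l \ M := fun hx2 => (hd.ne_of_mem hx hx2) rfl
          simp [Set.indicator_apply, hx, hx2]
        · simp [Set.indicator_apply, hx]
      rw [hpt, integral_zero]
  set avg : Fin K → Fin K → ℝ :=
    fun j k => (volume (B k \ M)).toReal⁻¹ * ∫ y in B k \ M, φ j y with havgdef
  set g : Fin K → Euc d → ℝ :=
    fun j x => ∑ k, avg j k * (B k \ M).indicator (fun _ => (1:ℝ)) x with hgdef
  have hg_mem : ∀ j, MemLp (g j) 2 μ := by
    intro j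
    simp only [hgdef]
    exact memLp_finsetSum (f := fun k x => avg j k * (B k \ M).indicator (fun _ => (1:ℝ)) x)
      Finset.univ (fun k _ =>
      (memLp_indicator_const 2 (hBδmeas k) (1:ℝ) (Or.inr (hμBδ_ne_top k))).const_mul (avg j k))
  -- the partition of Ω
  have hEq : Ω = (Ω \ (M ∪ ⋃ k, B k)) ∪ (M ∪ ⋃ k, B k \ M) := by
    apply Subset.antisymm
    · intro x hx
      by_cases hxM : x ∈ M
      · exact Or.inr (Or.inl hxM)
      · by_cases hxB : x ∈ ⋃ k, B k
        · obtain ⟨k, hk⟩ := mem_iUnion.mp hxB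
          exact Or.inr (Or.inr (mem_iUnion.mpr ⟨k, hk, hxM⟩))
        · exact Or.inl ⟨hx, fun h => h.elim hxM hxB⟩
    · intro x hx
      rcases hx with h | h | h
      · exact h.1
      · exact hMsub h
      · obtain ⟨k, hk⟩ := mem_iUnion.mp h
        exact hBsub k hk.1
  have hd1 : Disjoint (Ω \ (M ∪ ⋃ k, B k)) (M ∪ ⋃ k, B k \ M) := by
    refine Disjoint.mono_right ?_ disjoint_sdiff_self_left
    exact union_subset_union_right M (iUnion_mono fun k => diff_subset)
  have hd2 : Disjoint M (⋃ k, B k \ M) := by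
    exact disjoint_iUnion_right.mpr fun k => disjoint_sdiff_self_right
  have hmeasU : MeasurableSet (M ∪ ⋃ k, B k \ M) :=
    hMmeas.union (MeasurableSet.iUnion hBδmeas)
  have hBδdisj : Pairwise (Function.onFun Disjoint (fun k => B k \ M)) :=
    fun k l hkl => ((hBdisj hkl).mono diff_subset diff_subset)
  have hsplit : ∀ j, ∫ x, (φ j x - g j x)^2 ∂μ ≤ c*ε + c*δ + K*(c*ε) := by
    intro j
    have hmem : MemLp (fun x => φ j x - g j x) 2 μ := (hφ j).sub (hg_mem j)
    have hint : Integrable (fun x => (φ j x - g j x)^2) μ := hmem.integrable_sq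
    have hintOn : IntegrableOn (fun x => (φ j x - g j x)^2) Ω volume := hint
    have step1 : ∫ x, (φ j x - g j x)^2 ∂μ
        = (∫ x in Ω \ (M ∪ ⋃ k, B k), (φ j x - g j x)^2)
          + ((∫ x in M, (φ j x - g j x)^2)
            + ∑ k, ∫ x in B k \ M, (φ j x - g j x)^2) := by
      have h1 : ∫ x, (φ j x - g j x)^2 ∂μ
          = ∫ x in (Ω \ (M ∪ ⋃ k, B k)) ∪ (M ∪ ⋃ k, B k \ M), (φ j x - g j x)^2 := by
        rw [hμdef]
        conv_lhs => rw [hEq]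
      rw [h1]
      rw [setIntegral_union hd1 hmeasU
        (hintOn.mono_set (diff_subset.trans (subset_refl Ω)))
        (hintOn.mono_set (by rw [hEq]; exact subset_union_right))]
      congr 1
      rw [setIntegral_union hd2 (MeasurableSet.iUnion hBδmeas)
        (hintOn.mono_set hMsub)
        (hintOn.mono_set (iUnion_subset hBδsub))]
      congr 1
      rw [integral_iUnion hBδmeas hBδdisj (hintOn.mono_set (iUnion_subset hBδsub)),
        tsum_fintype]
    rw [step1]
    have hE' : (∫ x in Ω \ (M ∪ ⋃ k, B k), (φ j x - g j x)^2) ≤ c * ε := by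
      rw [setIntegral_congr_fun (hΩm.diff (hMmeas.union (MeasurableSet.iUnion hBmeas)))
        (show EqOn (fun x => (φ j x - g j x)^2) (fun x => (φ j x)^2) (Ω \ (M ∪ ⋃ k, B k)) by
          intro x hx
          have hg0 : g j x = 0 := by
            rw [hgdef]
            refine Finset.sum_eq_zero fun k _ => ?_
            have hxk : x ∉ B k \ M := fun h => hx.2 (Or.inr (mem_iUnion.mpr ⟨k, h.1⟩))
            simp [Set.indicator_apply, hxk]
          simp [hg0])]
      exact hEint j
    have hM' : (∫ x in M, (φ j x - g j x)^2) ≤ c * δ := by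
      rw [setIntegral_congr_fun hMmeas
        (show EqOn (fun x => (φ j x - g j x)^2) (fun x => (φ j x)^2) M by
          intro x hx
          have hg0 : g j x = 0 := by
            rw [hgdef]
            refine Finset.sum_eq_zero fun k _ => ?_
            have hxk : x ∉ B k \ M := fun h => h.2 hx
            simp [Set.indicator_apply, hxk]
          simp [hg0])]
      exact hMint j
    have hB' : ∀ k, (∫ x in B k \ M, (φ j x - g j x)^2) ≤ c * ε := by
      intro k
      rw [setIntegral_congr_fun (hBδmeas k)
        (show EqOn (fun x => (φ j x - g j x)^2) (fun x => (φ j x - avg j k)^2) (B k \ M) by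
          intro x hx
          have hgk : g j x = avg j k := by
            rw [hgdef]
            simp only
            rw [Finset.sum_eq_single k]
            · simp [Set.indicator_apply, hx]
            · intro l _ hlk
              have hxl : x ∉ B l \ M := fun h => ((hBdisj hlk).ne_of_mem h.1 hx.1) rfl
              simp [Set.indicator_apply, hxl]
            · exact fun h => absurd (Finset.mem_univ k) h
          simp [hgk])]
      have := hBδint j k
      rw [havgdef]
      exact this
    have hBsum : (∑ k, ∫ x in B k \ M, (φ j x - g j x)^2) ≤ K * (c * ε) := by
      calc (∑ k, ∫ x in B k \ M, (φ j x - g j x)^2) ≤ ∑ _k : Fin K, c * ε :=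
            Finset.sum_le_sum fun k _ => hB' k
        _ = K * (c * ε) := by
            rw [Finset.sum_const, Finset.card_univ, Fintype.card_fin, nsmul_eq_mul]
    linarith
  set rho : ℝ := Real.sqrt (c * (K+1) * (ε + δ)) with hρdef
  have hρ0 : 0 ≤ rho := Real.sqrt_nonneg _
  have hεle : ε ≤ 1 / (16*K*(K+1)*c) := le_trans hε.2 (min_le_right _ _)
  have hδle : δ ≤ 1 / (16*K*(K+1)*c) := le_trans hδ.2 (min_le_right _ _)
  have hδle' : δ ≤ m / (4*K*c) := le_trans hδ.2 (min_le_left _ _)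
  have hden : (0:ℝ) < 16*K*(K+1)*c := by
    have h1 : (0:ℝ) < 16*K := by linarith
    have h2 : (0:ℝ) < (K:ℝ)+1 := by linarith
    exact mul_pos (mul_pos h1 h2) hc
  have hρcond : Real.sqrt K * rho ≤ 1/2 := by
    rw [hρdef, ← Real.sqrt_mul (le_of_lt hK0)]
    have harg : (K:ℝ) * (c*(K+1)*(ε+δ)) ≤ 1/4 := by
      rw [le_div_iff₀ hden] at hεle hδle
      nlinarith [hε.1, hδ.1]
    calc Real.sqrt ((K:ℝ) * (c*(K+1)*(ε+δ))) ≤ Real.sqrt (1/4) := Real.sqrt_le_sqrt harg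
      _ = 1/2 := by rw [show (1/4:ℝ) = (1/2)^2 by norm_num, Real.sqrt_sq (by norm_num)]
  have hG_span : ∀ j, ((hg_mem j).toLp (g j)) ∈ Submodule.span ℝ (Set.range e) := by
    intro j
    have hGeq : (hg_mem j).toLp (g j) = ∑ k, (avg j k * Real.sqrt (t k)) • e k := by
      apply Lp.ext
      have h1 := (hg_mem j).coeFn_toLp
      have h2 := pc_coeFn_sum' (fun k => avg j k * Real.sqrt (t k)) e
        (fun k => (B k \ M).indicator (fun _ => a k)) (fun k => (he_mem k).coeFn_toLp)
      refine h1.trans (Filter.EventuallyEq.trans (Filter.Eventually.of_forall ?_) h2.symm)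
      intro x
      simp only [hgdef]
      refine Finset.sum_congr rfl fun k _ => ?_
      by_cases hx : x ∈ B k \ M
      · simp only [Set.indicator_apply, if_pos hx, hadef]
        rw [mul_one, mul_assoc, mul_inv_cancel₀ (hst_pos k).ne', mul_one]
      · simp [Set.indicator_apply, hx]
    rw [hGeq]
    exact Submodule.sum_mem _ fun k _ => Submodule.smul_mem _ _
      (Submodule.subset_span ⟨k, rfl⟩)
  have hclose : ∀ j, ∃ G ∈ Submodule.span ℝ (Set.range e), ‖f j - G‖ ≤ rho := by
    intro j
    refine ⟨(hg_mem j).toLp (g j), hG_span j, ?_⟩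
    have hsub : f j - (hg_mem j).toLp (g j) = ((hφ j).sub (hg_mem j)).toLp _ := by
      rw [hfdef]; simp only; rw [MemLp.toLp_sub]
    rw [hsub]
    have hsq : ‖((hφ j).sub (hg_mem j)).toLp _‖^2 ≤ rho^2 := by
      rw [pc_norm_toLp_sq _, hρdef,
        Real.sq_sqrt (mul_nonneg (mul_nonneg hc.le (by linarith)) (by linarith [hε.1, hδ.1]))]
      simp only [Pi.sub_apply]
      have h1 := hsplit j
      have h2 : c*ε + c*δ + K*(c*ε) ≤ c*(K+1)*(ε+δ) := by nlinarith [hε.1, hδ.1]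
      linarith
    have := Real.sqrt_le_sqrt hsq
    rwa [Real.sqrt_sq (norm_nonneg _), Real.sqrt_sq hρ0] at this
  -- apply the abstract approximation lemma
  set x : Lp ℝ 2 μ := ∑ k, (γ k * Real.sqrt (t k)) • e k with hxdef
  have hxspan : x ∈ Submodule.span ℝ (Set.range e) :=
    Submodule.sum_mem _ fun k _ => Submodule.smul_mem _ _ (Submodule.subset_span ⟨k, rfl⟩)
  obtain ⟨β, hβ⟩ := pc_approx_in_span f e hf_on he_on hρ0 hρcond hclose x hxspan
  refine ⟨β, ?_⟩
  -- the remainder pieces B k ∩ M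
  have hBM_meas : ∀ k, MeasurableSet (B k ∩ M) := fun k => (hBmeas k).inter hMmeas
  have hBM_sub : ∀ k, B k ∩ M ⊆ Ω := fun k => (inter_subset_left).trans (hBsub k)
  have hμBM_ne_top : ∀ k, μ (B k ∩ M) ≠ ∞ := by
    intro k; rw [hμeq _ (hBM_meas k) (hBM_sub k)]
    exact ne_top_of_le_ne_top (hvolB_ne_top k) (measure_mono inter_subset_left)
  have hw_mem : ∀ k, MemLp ((B k ∩ M).indicator (fun _ => (1:ℝ))) 2 μ :=
    fun k => memLp_indicator_const 2 (hBM_meas k) 1 (Or.inr (hμBM_ne_top k))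
  have hw_norm : ∀ k, ‖(hw_mem k).toLp _‖ ≤ Real.sqrt (c*δ) := by
    intro k
    have hsq : ‖(hw_mem k).toLp _‖^2 ≤ c*δ := by
      rw [pc_norm_toLp_sq _]
      have hpt : (fun x => ((B k ∩ M).indicator (fun _ => (1:ℝ)) x)^2)
          = fun x => (B k ∩ M).indicator (fun _ => (1:ℝ)) x := by
        funext y; by_cases hy : y ∈ B k ∩ M <;> simp [Set.indicator_apply, hy]
      rw [hpt, integral_indicator_const _ (hBM_meas k), Measure.real, hμeq _ (hBM_meas k) (hBM_sub k),
        smul_eq_mul, mul_one]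
      have h1 : volume (B k ∩ M) ≤ ENNReal.ofReal (c*δ) := by
        rw [inter_comm]; exact hMBle k
      have h2 := ENNReal.toReal_mono ENNReal.ofReal_ne_top h1
      rwa [ENNReal.toReal_ofReal (mul_nonneg hc.le hδ.1.le)] at h2
    have h3 := Real.sqrt_le_sqrt hsq
    rwa [Real.sqrt_sq (norm_nonneg _)] at h3
  have huw : ∀ k, u k - Real.sqrt (t k) • e k = (hw_mem k).toLp _ := by
    intro k
    simp only [hudef, hedef]
    apply Lp.ext
    filter_upwards [Lp.coeFn_sub ((hu_mem k).toLp _) (Real.sqrt (t k) • (he_mem k).toLp _),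
      Lp.coeFn_smul (Real.sqrt (t k) : ℝ) ((he_mem k).toLp _),
      (hu_mem k).coeFn_toLp, (he_mem k).coeFn_toLp, (hw_mem k).coeFn_toLp]
      with y hy1 hy2 hy3 hy4 hy5
    rw [hy1, Pi.sub_apply, hy2, Pi.smul_apply, hy3, hy4, hy5]
    by_cases hyB : y ∈ B k
    · by_cases hyM : y ∈ M
      · have h1 : y ∉ B k \ M := fun h => h.2 hyM
        have h2 : y ∈ B k ∩ M := ⟨hyB, hyM⟩
        simp [Set.indicator_apply, hyB, h1, h2]
      · have h1 : y ∈ B k \ M := ⟨hyB, hyM⟩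
        have h2 : y ∉ B k ∩ M := fun h => hyM h.2
        simp only [Set.indicator_apply, if_pos hyB, if_pos h1, if_neg h2, hadef,
          smul_eq_mul, mul_inv_cancel₀ (hst_pos k).ne']
        norm_num
    · have h1 : y ∉ B k \ M := fun h => hyB h.1
      have h2 : y ∉ B k ∩ M := fun h => hyB h.1
      simp [Set.indicator_apply, hyB, h1, h2]
  -- V and its distance to x
  set V : Lp ℝ 2 μ := ∑ k, γ k • u k with hVdef
  have hVx_eq : V - x = ∑ k, γ k • (u k - Real.sqrt (t k) • e k) := by
    rw [hVdef, hxdef, ← Finset.sum_sub_distrib]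
    refine Finset.sum_congr rfl fun k _ => ?_
    rw [smul_sub, smul_smul]
  have hG2 : (0:ℝ) ≤ Real.sqrt (∑ k, γ k ^2) := Real.sqrt_nonneg _
  have hVx : ‖V - x‖ ≤ Real.sqrt K * Real.sqrt (∑ k, γ k^2) * Real.sqrt (c*δ) := by
    rw [hVx_eq]
    calc ‖∑ k, γ k • (u k - Real.sqrt (t k) • e k)‖
        ≤ ∑ k, ‖γ k • (u k - Real.sqrt (t k) • e k)‖ := norm_sum_le _ _
      _ ≤ ∑ k, |γ k| * Real.sqrt (c*δ) := by
          refine Finset.sum_le_sum fun k _ => ?_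
          rw [norm_smul, Real.norm_eq_abs, huw k]
          exact mul_le_mul_of_nonneg_left (hw_norm k) (abs_nonneg _)
      _ = (∑ k, |γ k|) * Real.sqrt (c*δ) := by rw [← Finset.sum_mul]
      _ ≤ (Real.sqrt K * Real.sqrt (∑ k, γ k^2)) * Real.sqrt (c*δ) :=
          mul_le_mul_of_nonneg_right (pc_cs_sum_abs γ) (Real.sqrt_nonneg _)
  have hx_norm : ‖x‖ = Real.sqrt (∑ k, (γ k * Real.sqrt (t k))^2) := pc_norm_sum_smul he_on _
  have hmG_le_x : Real.sqrt m * Real.sqrt (∑ k, γ k^2) ≤ ‖x‖ := by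
    rw [hx_norm, ← Real.sqrt_mul hm.le]
    apply Real.sqrt_le_sqrt
    rw [Finset.mul_sum]
    refine Finset.sum_le_sum fun k _ => ?_
    rw [mul_pow, Real.sq_sqrt (ht_pos k).le]
    calc m * γ k^2 = γ k^2 * m := mul_comm _ _
      _ ≤ γ k^2 * t k := mul_le_mul_of_nonneg_left (ht_m k) (sq_nonneg _)
  have h4Kc : (0:ℝ) < 4*K*c := by
    have h1 : (0:ℝ) < 4*K := by linarith
    exact mul_pos h1 hc
  have hKcd : Real.sqrt K * Real.sqrt (c*δ) ≤ Real.sqrt m / 2 := by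
    rw [← Real.sqrt_mul (le_of_lt hK0)]
    have harg : (K:ℝ) * (c*δ) ≤ m/4 := by
      rw [le_div_iff₀ h4Kc] at hδle'
      nlinarith
    calc Real.sqrt ((K:ℝ)*(c*δ)) ≤ Real.sqrt (m/4) := Real.sqrt_le_sqrt harg
      _ = Real.sqrt m / 2 := by
          rw [show m / 4 = (Real.sqrt m / 2)^2 by rw [div_pow, Real.sq_sqrt hm.le]; norm_num,
            Real.sqrt_sq (by positivity)]
  have hVx2 : ‖V - x‖ ≤ ‖x‖ / 2 := by
    calc ‖V - x‖ ≤ Real.sqrt K * Real.sqrt (∑ k, γ k^2) * Real.sqrt (c*δ) := hVx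
      _ = (Real.sqrt K * Real.sqrt (c*δ)) * Real.sqrt (∑ k, γ k^2) := by ring
      _ ≤ (Real.sqrt m / 2) * Real.sqrt (∑ k, γ k^2) :=
          mul_le_mul_of_nonneg_right hKcd hG2
      _ = (Real.sqrt m * Real.sqrt (∑ k, γ k^2)) / 2 := by ring
      _ ≤ ‖x‖/2 := by linarith [hmG_le_x]
  have hxV : ‖x‖ ≤ 2 * ‖V‖ := by
    have h1 : ‖x‖ ≤ ‖V‖ + ‖V - x‖ := by
      calc ‖x‖ = ‖V - (V - x)‖ := by rw [sub_sub_cancel]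
        _ ≤ ‖V‖ + ‖V - x‖ := norm_sub_le _ _
    linarith [hVx2]
  have hsm : 0 < Real.sqrt m := Real.sqrt_pos.mpr hm
  have hGN : Real.sqrt (∑ k, γ k^2) ≤ 2*‖V‖/Real.sqrt m := by
    rw [le_div_iff₀ hsm]
    calc Real.sqrt (∑ k, γ k^2) * Real.sqrt m
        = Real.sqrt m * Real.sqrt (∑ k, γ k^2) := mul_comm _ _
      _ ≤ ‖x‖ := hmG_le_x
      _ ≤ 2*‖V‖ := hxV
  have hN : (0:ℝ) ≤ ‖V‖ := norm_nonneg _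
  have hs0 : (0:ℝ) ≤ Real.sqrt (ε+δ) := Real.sqrt_nonneg _
  have hF4 : Real.sqrt (c*δ) ≤ Real.sqrt c * Real.sqrt (ε+δ) := by
    rw [Real.sqrt_mul hc.le]
    exact mul_le_mul_of_nonneg_left (Real.sqrt_le_sqrt (by linarith [hε.1])) (Real.sqrt_nonneg _)
  have hF1 : ‖V - x‖ ≤ Real.sqrt (K*c) * Real.sqrt (ε+δ) * (2*‖V‖/Real.sqrt m) := by
    calc ‖V - x‖ ≤ Real.sqrt K * Real.sqrt (∑ k, γ k^2) * Real.sqrt (c*δ) := hVx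
      _ ≤ Real.sqrt K * Real.sqrt (∑ k, γ k^2) * (Real.sqrt c * Real.sqrt (ε+δ)) :=
          mul_le_mul_of_nonneg_left hF4 (by positivity)
      _ = (Real.sqrt K * Real.sqrt c) * Real.sqrt (ε+δ) * Real.sqrt (∑ k, γ k^2) := by ring
      _ = Real.sqrt (K*c) * Real.sqrt (ε+δ) * Real.sqrt (∑ k, γ k^2) := by
          rw [← Real.sqrt_mul (le_of_lt hK0)]
      _ ≤ Real.sqrt (K*c) * Real.sqrt (ε+δ) * (2*‖V‖/Real.sqrt m) :=
          mul_le_mul_of_nonneg_left hGN (by positivity)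
  have hF3 : ‖x - ∑ j, β j • f j‖ ≤ 4 * (Real.sqrt K * Real.sqrt (c*((K:ℝ)+1))) *
      Real.sqrt (ε+δ) * ‖V‖ := by
    calc ‖x - ∑ j, β j • f j‖ ≤ 2*(Real.sqrt K * rho)*‖x‖ := hβ
      _ ≤ 2*(Real.sqrt K * rho)*(2*‖V‖) :=
          mul_le_mul_of_nonneg_left hxV (by positivity)
      _ = 4*Real.sqrt K*rho*‖V‖ := by ring
      _ = 4*Real.sqrt K*(Real.sqrt (c*((K:ℝ)+1))*Real.sqrt (ε+δ))*‖V‖ := by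
          rw [hρdef, Real.sqrt_mul (by positivity : (0:ℝ) ≤ c*((K:ℝ)+1))]
      _ = 4 * (Real.sqrt K * Real.sqrt (c*((K:ℝ)+1))) * Real.sqrt (ε+δ) * ‖V‖ := by ring
  have htr : ‖V - ∑ j, β j • f j‖ ≤ ‖V - x‖ + ‖x - ∑ j, β j • f j‖ := by
    calc ‖V - ∑ j, β j • f j‖ = ‖(V - x) + (x - ∑ j, β j • f j)‖ := by
          rw [sub_add_sub_cancel]
      _ ≤ ‖V - x‖ + ‖x - ∑ j, β j • f j‖ := norm_add_le _ _
  have hC1 : Real.sqrt (K*c) * Real.sqrt (ε+δ) * (2*‖V‖/Real.sqrt m)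
      = (2*Real.sqrt (K*c)/Real.sqrt m) * Real.sqrt (ε+δ) * ‖V‖ := by
    field_simp
  have hfinal : ‖V - ∑ j, β j • f j‖ ≤ C * Real.sqrt (ε+δ) * ‖V‖ := by
    have hsn : (0:ℝ) ≤ Real.sqrt (ε+δ) * ‖V‖ := mul_nonneg hs0 hN
    rw [hCdef]
    nlinarith [htr, hF1, hF3, hC1, hsn]
  -- conversion to eLpNorm
  have hVcoe : ⇑V =ᵐ[μ] (fun y => ∑ k, γ k * (B k).indicator (fun _ => (1:ℝ)) y) := by
    rw [hVdef]
    exact pc_coeFn_sum' γ u _ (fun k => (hu_mem k).coeFn_toLp)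
  have hYcoe : ⇑(∑ j, β j • f j) =ᵐ[μ] (fun y => ∑ j, β j * φ j y) :=
    pc_coeFn_sum' β f _ (fun j => (hφ j).coeFn_toLp)
  have hVYcoe : ⇑(V - ∑ j, β j • f j) =ᵐ[μ]
      (fun y => (∑ k, γ k * (B k).indicator (fun _ => (1:ℝ)) y) - ∑ j, β j * φ j y) := by
    filter_upwards [Lp.coeFn_sub V (∑ j, β j • f j), hVcoe, hYcoe] with y hy1 hy2 hy3
    rw [hy1, Pi.sub_apply, hy2, hy3]
  have hLHS : eLpNorm (fun y => (∑ k, γ k * (B k).indicator (fun _ => (1:ℝ)) y)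
      - ∑ j, β j * φ j y) 2 μ = ENNReal.ofReal ‖V - ∑ j, β j • f j‖ := by
    rw [← eLpNorm_congr_ae hVYcoe, Lp.norm_def,
      ENNReal.ofReal_toReal (Lp.eLpNorm_ne_top _)]
  have hRHS : eLpNorm (fun y => ∑ k, γ k * (B k).indicator (fun _ => (1:ℝ)) y) 2 μ
      = ENNReal.ofReal ‖V‖ := by
    rw [← eLpNorm_congr_ae hVcoe, Lp.norm_def,
      ENNReal.ofReal_toReal (Lp.eLpNorm_ne_top _)]
  rw [hLHS, hRHS, ← ENNReal.ofReal_mul (by positivity)]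
  apply ENNReal.ofReal_le_ofReal
  calc ‖V - ∑ j, β j • f j‖ ≤ C * Real.sqrt (ε+δ) * ‖V‖ := hfinal
    _ = C * Real.sqrt (ε+δ) * ‖V‖ := rfl
end
end
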